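/- Let t ≥ 2 and k ≥ 2 be integers. Then forb(m, {t·I_k, t·I_k^c, t·T_k}) = Θ(m); that is, there exist constants c1, c2 > 0 and an integer m0 such that for all m ≥ m0, c1·m ≤ forb(m, {t·I_k, t·I_k^c, t·T_k}) ≤ c2·m. -/

import Mathlib

/-- `F` is a configuration in `A`: some row and column permutation of `F`
is a submatrix of `A`. -/
def IsConfig {k n m p : ℕ} (F : Matrix (Fin k) (Fin n) Bool)
    (A : Matrix (Fin m) (Fin p) Bool) : Prop :=
  ∃ (r : Fin k → Fin m) (c : Fin n → Fin p),
    Function.Injective r ∧ Function.Injective c ∧ ∀ i j, A (r i) (c j) = F i j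

/-- A (0,1)-matrix is simple if no two of its columns are equal. -/
def Simple {m p : ℕ} (A : Matrix (Fin m) (Fin p) Bool) : Prop :=
  Function.Injective fun j i => A i j

/-- A (0,1)-matrix is `t`-simple if every column occurs with multiplicity at most `t`. -/
def TSimple {m p : ℕ} (t : ℕ) (A : Matrix (Fin m) (Fin p) Bool) : Prop :=
  ∀ j : Fin p, (Finset.univ.filter fun j' : Fin p => ∀ i, A i j' = A i j).card ≤ t

/-- `forb m F`: the maximum number of columns of an `m`-rowed simple matrix
avoiding `F` as a configuration. -/
noncomputable def forb (m : ℕ) {k n : ℕ} (F : Matrix (Fin k) (Fin n) Bool) : ℕ :=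
  sSup { p : ℕ | ∃ A : Matrix (Fin m) (Fin p) Bool, Simple A ∧ ¬ IsConfig F A }

/-- `t·M`: the concatenation of `t` copies of `M`. -/
def tCopies {k n : ℕ} (t : ℕ) (M : Matrix (Fin k) (Fin n) Bool) :
    Matrix (Fin k) (Fin (t * n)) Bool :=
  fun i j => M i ⟨j.val % n, Nat.mod_lt _ (by
    rcases Nat.eq_zero_or_pos n with h | h
    · exact absurd j.isLt (by simp [h])
    · exact h)⟩

/-- `F_{a,b,c,d}`: the `(a+b+c+d) × 2` matrix with `a` rows `[1 1]`, `b` rows `[1 0]`,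
`c` rows `[0 1]` and `d` rows `[0 0]`. -/
def Fabcd (a b c d : ℕ) : Matrix (Fin (a+b+c+d)) (Fin 2) Bool :=
  fun i j =>
    if i.val < a then true
    else if i.val < a + b then decide (j = 0)
    else if i.val < a + b + c then decide (j = 1)
    else false

/-- The `k × k` identity matrix (as a (0,1)-matrix). -/
def Imat (k : ℕ) : Matrix (Fin k) (Fin k) Bool := fun i j => decide (i = j)

/-- The (0,1)-complement of the `k × k` identity matrix. -/
def Icmat (k : ℕ) : Matrix (Fin k) (Fin k) Bool := fun i j => decide (i ≠ j)

/-- The `k × k` upper triangular (0,1)-matrix: entry `(i,j)` is 1 iff `i ≤ j`. -/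
def Tmat (k : ℕ) : Matrix (Fin k) (Fin k) Bool := fun i j => decide (i ≤ j)

/-- `forb(m, {F1, F2, F3})` for a triple of forbidden configurations. -/
noncomputable def forbTriple (m : ℕ) {k1 n1 k2 n2 k3 n3 : ℕ}
    (F1 : Matrix (Fin k1) (Fin n1) Bool) (F2 : Matrix (Fin k2) (Fin n2) Bool)
    (F3 : Matrix (Fin k3) (Fin n3) Bool) : ℕ :=
  sSup { p : ℕ | ∃ A : Matrix (Fin m) (Fin p) Bool,
    Simple A ∧ ¬ IsConfig F1 A ∧ ¬ IsConfig F2 A ∧ ¬ IsConfig F3 A }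

namespace Stmt11

open Finset

def splits {m : ℕ} (G : Finset (Fin m → Bool)) (rr : Fin m) : Finset (Fin m → Bool) :=
  G.filter fun f => f rr = false ∧ Function.update f rr true ∈ G


def famGood (t : ℕ) {k m : ℕ} (M : Matrix (Fin k) (Fin k) Bool)
    (G : Finset (Fin m → Bool)) : Prop :=
  ∃ r : Fin k → Fin m, Function.Injective r ∧
    ∀ a : Fin k, t ≤ (G.filter fun f => ∀ b, f (r b) = M b a).card


lemma preRamsey {α C : Type} [LinearOrder α] [Fintype C] [DecidableEq C] [Nonempty C]
    (col : α → α → C) :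
    ∀ (n : ℕ) (T : Finset α), (Fintype.card C + 1) ^ n ≤ T.card →
    ∃ (a : Fin n → α) (cc : Fin n → C), StrictMono a ∧ (∀ i, a i ∈ T) ∧
      ∀ i j : Fin n, i < j → col (a i) (a j) = cc i := by
  intro n
  induction n with
  | zero =>
    intro T _
    exact ⟨Fin.elim0, Fin.elim0, fun i => i.elim0, fun i => i.elim0, fun i => i.elim0⟩
  | succ n ih =>
    intro T hT
    have hCpos : 0 < Fintype.card C + 1 := Nat.succ_pos _
    have hTpos : 0 < T.card := lt_of_lt_of_le (pow_pos hCpos (n + 1)) hT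
    have hne : T.Nonempty := card_pos.mp hTpos
    set x := T.min' hne with hx
    have hxT : x ∈ T := T.min'_mem hne
    have hmaps : ∀ y ∈ T.erase x, col x y ∈ (univ : Finset C) := fun y _ => mem_univ _
    have h1 : 1 ≤ (Fintype.card C + 1) ^ n := Nat.one_le_pow _ _ hCpos
    have hcard : (univ : Finset C).card * (Fintype.card C + 1) ^ n ≤ (T.erase x).card := by
      rw [card_univ, card_erase_of_mem hxT]
      have hexp : (Fintype.card C + 1) ^ (n + 1)
          = Fintype.card C * (Fintype.card C + 1) ^ n + (Fintype.card C + 1) ^ n := by ring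
      omega
    obtain ⟨c0, -, hfib⟩ :=
      Finset.exists_le_card_fiber_of_mul_le_card_of_maps_to hmaps univ_nonempty hcard
    obtain ⟨a, cc, hmono, hmem, hcol⟩ := ih ((T.erase x).filter fun y => col x y = c0) hfib
    have hxlt : ∀ i : Fin n, x < a i := by
      intro i
      have := (mem_filter.mp (hmem i)).1
      exact Finset.min'_lt_of_mem_erase_min' _ hne this
    refine ⟨Fin.cons x a, Fin.cons c0 cc, ?_, ?_, ?_⟩
    · intro i j hij
      induction j using Fin.cases with
      | zero => exact absurd hij (by simp [Fin.lt_iff_val_lt_val])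
      | succ j' =>
        induction i using Fin.cases with
        | zero => simpa using hxlt j'
        | succ i' =>
          simp only [Fin.cons_succ]
          exact hmono (by exact_mod_cast Fin.succ_lt_succ_iff.mp hij)
    · intro i
      induction i using Fin.cases with
      | zero => simpa using hxT
      | succ i' =>
        simp only [Fin.cons_succ]
        exact mem_of_mem_erase (mem_filter.mp (hmem i')).1
    · intro i j hij
      induction j using Fin.cases with
      | zero => exact absurd hij (by simp [Fin.lt_iff_val_lt_val])
      | succ j' =>
        induction i using Fin.cases with
        | zero =>
          simp only [Fin.cons_succ, Fin.cons_zero]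
          exact (mem_filter.mp (hmem j')).2
        | succ i' =>
          simp only [Fin.cons_succ]
          exact hcol i' j' (by exact_mod_cast Fin.succ_lt_succ_iff.mp hij)


lemma ramsey {α C : Type} [LinearOrder α] [Fintype C] [DecidableEq C] [Nonempty C]
    (k : ℕ) (col : α → α → C) (T : Finset α)
    (hT : (Fintype.card C + 1) ^ (Fintype.card C * k) ≤ T.card) :
    ∃ a : Fin k → α, StrictMono a ∧ (∀ i, a i ∈ T) ∧
      ∃ c0 : C, ∀ i j : Fin k, i < j → col (a i) (a j) = c0 := by
  obtain ⟨a, cc, hmono, hmem, hcol⟩ := preRamsey col (Fintype.card C * k) T hT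
  have hmaps : ∀ i ∈ (univ : Finset (Fin (Fintype.card C * k))), cc i ∈ (univ : Finset C) :=
    fun i _ => mem_univ _
  have hcard : (univ : Finset C).card * k ≤ (univ : Finset (Fin (Fintype.card C * k))).card := by
    simp [card_univ]
  obtain ⟨c0, -, hfib⟩ :=
    Finset.exists_le_card_fiber_of_mul_le_card_of_maps_to hmaps univ_nonempty hcard
  obtain ⟨V, hVsub, hVcard⟩ := Finset.exists_subset_card_eq hfib
  set e := V.orderIsoOfFin hVcard with he
  refine ⟨fun i => a (e i), ?_, fun i => hmem _, c0, ?_⟩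
  · intro i j hij
    exact hmono (by exact_mod_cast e.strictMono hij)
  · intro i j hij
    have hlt : ((e i : V) : Fin (Fintype.card C * k)) < (e j : V) := by
      exact_mod_cast e.strictMono hij
    have := hcol _ _ hlt
    rw [this]
    have hiV : ((e i : V) : Fin (Fintype.card C * k)) ∈ V := (e i).2
    have := hVsub hiV
    exact (mem_filter.mp this).2

lemma delete_count {m : ℕ} (G : Finset (Fin (m + 1) → Bool)) (rr : Fin (m + 1)) :
    G.card ≤ (G.image fun f => f ∘ rr.succAbove).card + (splits G rr).card := by
  classical
  set ρ : (Fin (m + 1) → Bool) → (Fin m → Bool) := fun f => f ∘ rr.succAbove with hρ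
  set G0 := G.filter (fun f => f rr = false) with hG0
  set G1 := G.filter (fun f => f rr = true) with hG1
  have hunion : G0 ∪ G1 = G := by
    ext f
    simp only [hG0, hG1, mem_union, mem_filter]
    rcases Bool.eq_false_or_eq_true (f rr) with h | h <;> tauto
  have hdisj : Disjoint G0 G1 := by
    rw [Finset.disjoint_left]
    intro f hf0 hf1
    have h0 := (mem_filter.mp hf0).2
    have h1 := (mem_filter.mp hf1).2
    rw [h0] at h1
    exact absurd h1 (by simp)
  -- injectivity of ρ on parts with fixed value at rr
  have hinj : ∀ (b : Bool) (f1 f2 : Fin (m+1) → Bool), f1 rr = b → f2 rr = b →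
      ρ f1 = ρ f2 → f1 = f2 := by
    intro b f1 f2 h1 h2 he
    funext x
    by_cases hx : x = rr
    · rw [hx, h1, h2]
    · obtain ⟨z, hz⟩ := Fin.exists_succAbove_eq hx
      have := congrFun he z
      simpa [hρ, hz] using this
  have hinj0 : Set.InjOn ρ ↑G0 := by
    intro f1 h1 f2 h2 he
    exact hinj false f1 f2 (mem_filter.mp h1).2 (mem_filter.mp h2).2 he
  have hinj1 : Set.InjOn ρ ↑G1 := by
    intro f1 h1 f2 h2 he
    exact hinj true f1 f2 (mem_filter.mp h1).2 (mem_filter.mp h2).2 he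
  have hcard : G.card = (G0.image ρ).card + (G1.image ρ).card := by
    rw [card_image_of_injOn hinj0, card_image_of_injOn hinj1, ← card_union_of_disjoint hdisj,
      hunion]
  have himgu : G0.image ρ ∪ G1.image ρ = G.image ρ := by
    rw [← image_union, hunion]
  have hintersub : (G0.image ρ) ∩ (G1.image ρ) ⊆ (splits G rr).image ρ := by
    intro h hmem
    rw [mem_inter] at hmem
    obtain ⟨hm0, hm1⟩ := hmem
    obtain ⟨f0, hf0, hf0e⟩ := mem_image.mp hm0
    obtain ⟨f1, hf1, hf1e⟩ := mem_image.mp hm1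
    rw [mem_filter] at hf0 hf1
    have hupd : Function.update f0 rr true = f1 := by
      funext x
      by_cases hx : x = rr
      · rw [hx]; simp [Function.update_self, hf1.2]
      · obtain ⟨z, hz⟩ := Fin.exists_succAbove_eq hx
        have : ρ f0 z = ρ f1 z := by rw [hf0e, hf1e]
        simp only [hρ, Function.comp] at this
        rw [Function.update_of_ne hx, ← hz, this]
    refine mem_image.mpr ⟨f0, ?_, hf0e⟩
    refine mem_filter.mpr ⟨hf0.1, hf0.2, ?_⟩
    rw [hupd]; exact hf1.1
  calc G.card = (G0.image ρ).card + (G1.image ρ).card := hcard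
    _ = (G0.image ρ ∪ G1.image ρ).card + (G0.image ρ ∩ G1.image ρ).card :=
        (card_union_add_card_inter _ _).symm
    _ ≤ (G.image ρ).card + (splits G rr).card := by
        rw [himgu]
        exact Nat.add_le_add le_rfl (le_trans (card_le_card hintersub) (card_image_le))


lemma delete_good {t k m : ℕ} (M : Matrix (Fin k) (Fin k) Bool)
    (G : Finset (Fin (m + 1) → Bool)) (rr : Fin (m + 1))
    (h : famGood t M (G.image fun f => f ∘ rr.succAbove)) : famGood t M G := by
  classical
  obtain ⟨r', hr'inj, hr'⟩ := h
  refine ⟨fun b => rr.succAbove (r' b), fun a b hab => hr'inj (Fin.succAbove_right_injective hab), ?_⟩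
  intro a
  refine le_trans (hr' a) (card_le_card_of_surjOn (fun f => f ∘ rr.succAbove) ?_)
  intro g' hg'
  simp only [coe_filter, Set.mem_setOf_eq, mem_image] at hg'
  obtain ⟨⟨f, hf, hfe⟩, hg'2⟩ := hg'
  refine ⟨f, ?_, hfe⟩
  simp only [coe_filter, Set.mem_setOf_eq]
  refine ⟨hf, fun b => ?_⟩
  have := hg'2 b
  rw [← hfe] at this
  exact this

lemma key (t k : ℕ) (ht : 1 ≤ t) {m : ℕ} (hm : 5 ^ (4 * k) ≤ m)
    (G : Finset (Fin m → Bool))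
    (hsplit : ∀ rr : Fin m, t * 2 ^ (5 ^ (4 * k)) ≤ (splits G rr).card) :
    famGood t (Imat k) G ∨ famGood t (Icmat k) G ∨ famGood t (Tmat k) G := by
  classical
  set N := 5 ^ (4 * k) with hN
  have hq : ∀ i : Fin N, i.val < m := fun i => lt_of_lt_of_le i.isLt hm
  set q : Fin N → Fin m := fun i => ⟨i.val, hq i⟩ with hqdef
  have hqinj : Function.Injective q := by
    intro i j h
    exact Fin.ext (show i.val = j.val from congrArg (Fin.val : Fin m → ℕ) h)
  -- popular patterns on the first N rows among split columns
  have hpop : ∀ i : Fin N, ∃ g : Fin N → Bool,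
      t ≤ ((splits G (q i)).filter fun f => (fun j => f (q j)) = g).card := by
    intro i
    have hmaps : ∀ f ∈ splits G (q i), (fun j => f (q j)) ∈ (univ : Finset (Fin N → Bool)) :=
      fun f _ => mem_univ _
    have hcard : (univ : Finset (Fin N → Bool)).card * t ≤ (splits G (q i)).card := by
      rw [card_univ]
      have hcf : Fintype.card (Fin N → Bool) = 2 ^ N := by
        simp [Fintype.card_fun]
      rw [hcf, mul_comm]
      exact hsplit (q i)
    obtain ⟨g, -, hgg⟩ :=
      Finset.exists_le_card_fiber_of_mul_le_card_of_maps_to hmaps univ_nonempty hcard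
    exact ⟨g, hgg⟩
  choose g hg using hpop
  -- g i i = false
  have hgii : ∀ i : Fin N, g i i = false := by
    intro i
    have hpos : 0 < ((splits G (q i)).filter fun f => (fun j => f (q j)) = g i).card :=
      lt_of_lt_of_le ht (hg i)
    obtain ⟨f, hf⟩ := card_pos.mp hpos
    rw [mem_filter] at hf
    have hf0 : f (q i) = false := (mem_filter.mp hf.1).2.1
    have := congrFun hf.2 i
    rw [← this, hf0]
  -- popularity of patterns g i (value false at q i)
  have pop0 : ∀ i : Fin N, t ≤ (G.filter fun f => ∀ j, f (q j) = g i j).card := by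
    intro i
    refine le_trans (hg i) (card_le_card ?_)
    intro f hf
    rw [mem_filter] at hf ⊢
    exact ⟨(mem_filter.mp hf.1).1, fun j => congrFun hf.2 j⟩
  -- popularity of patterns (update (g i) i true)
  have pop1 : ∀ i : Fin N,
      t ≤ (G.filter fun f => ∀ j, f (q j) = Function.update (g i) i true j).card := by
    intro i
    refine le_trans (hg i) (Finset.card_le_card_of_injOn
      (fun f => Function.update f (q i) true) ?_ ?_)
    · intro f hf
      rw [mem_coe, mem_filter] at hf
      have hfs := mem_filter.mp hf.1
      have hf0 : f (q i) = false := hfs.2.1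
      show Function.update f (q i) true ∈ _
      rw [mem_coe, mem_filter]
      refine ⟨hfs.2.2, fun j => ?_⟩
      by_cases hji : j = i
      · subst hji
        rw [Function.update_self, Function.update_self]
      · have hqji : q j ≠ q i := fun hcon => hji (hqinj hcon)
        rw [Function.update_of_ne hqji, Function.update_of_ne hji, ← congrFun hf.2 j]
    · intro f1 hf1 f2 hf2 he
      rw [mem_coe, mem_filter] at hf1 hf2
      have h10 : f1 (q i) = false := (mem_filter.mp hf1.1).2.1
      have h20 : f2 (q i) = false := (mem_filter.mp hf2.1).2.1
      have he' : Function.update f1 (q i) true = Function.update f2 (q i) true := he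
      funext x
      by_cases hx : x = q i
      · rw [hx, h10, h20]
      · have := congrFun he' x
        rwa [Function.update_of_ne hx, Function.update_of_ne hx] at this
  -- Ramsey
  have hcardC : Fintype.card (Bool × Bool) = 4 := by simp
  have hT : (Fintype.card (Bool × Bool) + 1) ^ (Fintype.card (Bool × Bool) * k)
      ≤ (univ : Finset (Fin N)).card := by
    rw [hcardC, card_univ, Fintype.card_fin]
  obtain ⟨x, hxmono, -, c0, hcol⟩ :=
    ramsey k (fun i j : Fin N => (g i j, g j i)) univ hT
  obtain ⟨b1, b2⟩ := c0
  have hom1 : ∀ a b : Fin k, a < b → g (x a) (x b) = b1 := by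
    intro a b hab
    have := hcol a b hab
    exact (Prod.mk.injEq _ _ _ _ ▸ this : _ ∧ _).1
  have hom2 : ∀ a b : Fin k, a < b → g (x b) (x a) = b2 := by
    intro a b hab
    have := hcol a b hab
    exact (Prod.mk.injEq _ _ _ _ ▸ this : _ ∧ _).2
  set r : Fin k → Fin m := fun b => q (x b) with hrdef
  have hrinj : Function.Injective r := fun a b h => hxmono.injective (hqinj h)
  -- restricted popularity
  have popR0 : ∀ a : Fin k, t ≤ (G.filter fun f => ∀ b, f (r b) = g (x a) (x b)).card := by
    intro a
    refine le_trans (pop0 (x a)) (card_le_card ?_)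
    intro f hf
    rw [mem_filter] at hf ⊢
    exact ⟨hf.1, fun b => hf.2 (x b)⟩
  have popR1 : ∀ a : Fin k,
      t ≤ (G.filter fun f =>
        ∀ b, f (r b) = Function.update (g (x a)) (x a) true (x b)).card := by
    intro a
    refine le_trans (pop1 (x a)) (card_le_card ?_)
    intro f hf
    rw [mem_filter] at hf ⊢
    exact ⟨hf.1, fun b => hf.2 (x b)⟩
  -- case analysis on the homogeneous colour
  rcases Bool.eq_false_or_eq_true b1 with hb1 | hb1 <;>
    rcases Bool.eq_false_or_eq_true b2 with hb2 | hb2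
  · -- (b1,b2) = (true, true) : complement of identity
    refine Or.inr (Or.inl ⟨r, hrinj, fun a => le_trans (popR0 a) (card_le_card ?_)⟩)
    intro f hf
    rw [mem_filter] at hf ⊢
    refine ⟨hf.1, fun b => ?_⟩
    rw [hf.2 b]
    by_cases hba : b = a
    · subst hba
      rw [hgii (x b)]
      simp [Icmat]
    · rcases lt_or_gt_of_ne hba with h | h
      · rw [hom2 b a h, hb2]
        simp [Icmat, hba]
      · rw [hom1 a b h, hb1]
        simp [Icmat, hba]
  · -- (true, false) : triangular, reversed
    refine Or.inr (Or.inr ⟨fun b => r b.rev, fun a b h => Fin.rev_injective (hrinj h),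
      fun a => le_trans (popR1 a.rev) (card_le_card ?_)⟩)
    intro f hf
    rw [mem_filter] at hf ⊢
    refine ⟨hf.1, fun b => ?_⟩
    rw [hf.2 b.rev]
    by_cases hba : b = a
    · subst hba
      rw [Function.update_self]
      simp [Tmat]
    · have hrevne : b.rev ≠ a.rev := fun hcon => hba (Fin.rev_injective hcon)
      have hxne : x b.rev ≠ x a.rev := fun hcon => hrevne (hxmono.injective hcon)
      rw [Function.update_of_ne hxne]
      rcases lt_or_gt_of_ne hba with h | h
      · have hrev : a.rev < b.rev := Fin.rev_lt_rev.mpr h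
        rw [hom1 a.rev b.rev hrev, hb1]
        simp [Tmat, le_of_lt h]
      · have hrev : b.rev < a.rev := Fin.rev_lt_rev.mpr h
        rw [hom2 b.rev a.rev hrev, hb2]
        simp [Tmat, not_le.mpr h]
  · -- (false, true) : triangular, directly
    refine Or.inr (Or.inr ⟨r, hrinj, fun a => le_trans (popR1 a) (card_le_card ?_)⟩)
    intro f hf
    rw [mem_filter] at hf ⊢
    refine ⟨hf.1, fun b => ?_⟩
    rw [hf.2 b]
    by_cases hba : b = a
    · subst hba
      rw [Function.update_self]
      simp [Tmat]
    · have hxne : x b ≠ x a := fun hcon => hba (hxmono.injective hcon)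
      rw [Function.update_of_ne hxne]
      rcases lt_or_gt_of_ne hba with h | h
      · rw [hom2 b a h, hb2]
        simp [Tmat, le_of_lt h]
      · rw [hom1 a b h, hb1]
        simp [Tmat, not_le.mpr h]
  · -- (false, false) : identity
    refine Or.inl ⟨r, hrinj, fun a => le_trans (popR1 a) (card_le_card ?_)⟩
    intro f hf
    rw [mem_filter] at hf ⊢
    refine ⟨hf.1, fun b => ?_⟩
    rw [hf.2 b]
    by_cases hba : b = a
    · subst hba
      rw [Function.update_self]
      simp [Imat]
    · have hxne : x b ≠ x a := fun hcon => hba (hxmono.injective hcon)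
      rw [Function.update_of_ne hxne]
      rcases lt_or_gt_of_ne hba with h | h
      · rw [hom2 b a h, hb2]
        simp [Imat, hba]
      · rw [hom1 a b h, hb1]
        simp [Imat, hba]

lemma core (t k : ℕ) (ht : 1 ≤ t) :
    ∀ (m : ℕ) (G : Finset (Fin m → Bool)),
      ¬ famGood t (Imat k) G → ¬ famGood t (Icmat k) G → ¬ famGood t (Tmat k) G →
      G.card ≤ t * 2 ^ (5 ^ (4 * k)) * (m + 1) := by
  intro m
  set N := 5 ^ (4 * k) with hN
  set c := t * 2 ^ N with hc
  have hc1 : 1 ≤ c := Nat.one_le_iff_ne_zero.mpr (by positivity)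
  induction m with
  | zero =>
    intro G _ _ _
    have : G.card ≤ Fintype.card (Fin 0 → Bool) := card_le_univ G
    simp only [Fintype.card_fun, Fintype.card_bool, Fintype.card_fin, pow_zero] at this
    omega
  | succ m ih =>
    intro G h1 h2 h3
    by_cases hcase : ∃ rr : Fin (m + 1), (splits G rr).card ≤ c
    · obtain ⟨rr, hrr⟩ := hcase
      have hd := delete_count G rr
      set G' := G.image fun f => f ∘ rr.succAbove with hG'
      have ih' := ih G' (fun h => h1 (delete_good _ G rr h))
        (fun h => h2 (delete_good _ G rr h)) (fun h => h3 (delete_good _ G rr h))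
      calc G.card ≤ G'.card + (splits G rr).card := hd
        _ ≤ c * (m + 1) + c := Nat.add_le_add ih' hrr
        _ = c * (m + 1 + 1) := by ring
    · push_neg at hcase
      have hmN : N ≤ m + 1 := by
        by_contra hcon
        push_neg at hcon
        have hGc : G.card ≤ 2 ^ (m + 1) := by
          have : G.card ≤ Fintype.card (Fin (m + 1) → Bool) := card_le_univ G
          simpa [Fintype.card_fun] using this
        have hsp : (splits G ⟨0, Nat.succ_pos m⟩).card ≤ G.card :=
          card_le_card (filter_subset _ _)
        have h2N : 2 ^ (m + 1) ≤ 2 ^ N := Nat.pow_le_pow_right (by norm_num) (le_of_lt hcon)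
        have : (splits G ⟨0, Nat.succ_pos m⟩).card ≤ c := by
          calc (splits G ⟨0, Nat.succ_pos m⟩).card ≤ 2 ^ N := le_trans hsp (le_trans hGc h2N)
            _ ≤ t * 2 ^ N := Nat.le_mul_of_pos_left _ ht
        exact absurd this (not_le.mpr (hcase _))
      rcases key t k ht hmN G (fun rr => le_of_lt (hcase rr)) with h | h | h
      · exact absurd h h1
      · exact absurd h h2
      · exact absurd h h3

lemma Imat_colinj (k : ℕ) : Function.Injective fun j i => Imat k i j := by
  intro a b h
  have := congrFun h a
  simp only [Imat, decide_eq_decide] at this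
  simp only [eq_self_iff_true, true_iff] at this
  exact this

lemma Icmat_colinj (k : ℕ) : Function.Injective fun j i => Icmat k i j := by
  intro a b h
  have := congrFun h a
  simp only [Icmat, decide_eq_decide] at this
  by_contra hne
  exact (this.mpr fun hq => hne hq) rfl

lemma Tmat_colinj (k : ℕ) : Function.Injective fun j i => Tmat k i j := by
  intro a b h
  have h1 := congrFun h a
  have h2 := congrFun h b
  simp only [Tmat, decide_eq_decide] at h1 h2
  exact le_antisymm (h1.mp le_rfl) (h2.mpr le_rfl)

lemma good_to_config {t k m p : ℕ} (M : Matrix (Fin k) (Fin k) Bool)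
    (hM : Function.Injective fun j i => M i j)
    (A : Matrix (Fin m) (Fin p) Bool) (hA : Simple A) (hk : 0 < k)
    (h : famGood t M ((univ : Finset (Fin p)).image fun j i => A i j)) :
    IsConfig (tCopies t M) A := by
  classical
  obtain ⟨r, hrinj, hpop⟩ := h
  have hTa : ∀ a : Fin k, t ≤ (univ.filter fun j : Fin p => ∀ b, A (r b) j = M b a).card := by
    intro a
    have := hpop a
    rwa [Finset.filter_image, card_image_of_injective _ hA] at this
  have hF : ∀ a : Fin k, ∃ F : Fin t → Fin p, Function.Injective F ∧
      ∀ i, F i ∈ univ.filter fun j : Fin p => ∀ b, A (r b) j = M b a := by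
    intro a
    obtain ⟨U, hUsub, hUcard⟩ := Finset.exists_subset_card_eq (hTa a)
    set e := U.orderIsoOfFin hUcard with he
    refine ⟨fun i => (e i : Fin p), ?_, ?_⟩
    · intro i1 i2 hi
      exact e.injective (Subtype.ext hi)
    · intro i
      exact hUsub (e i).2
  choose F hFinj hFmem using hF
  have hdiv : ∀ j : Fin (t * k), j.val / k < t := fun j =>
    (Nat.div_lt_iff_lt_mul hk).mpr j.isLt
  have hmod : ∀ j : Fin (t * k), j.val % k < k := fun j => Nat.mod_lt _ hk
  set cmap : Fin (t * k) → Fin p :=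
    fun j => F ⟨j.val % k, hmod j⟩ ⟨j.val / k, hdiv j⟩ with hcmap
  have hmemT : ∀ j : Fin (t * k),
      ∀ b, A (r b) (cmap j) = M b ⟨j.val % k, hmod j⟩ := by
    intro j
    exact (mem_filter.mp (hFmem ⟨j.val % k, hmod j⟩ ⟨j.val / k, hdiv j⟩)).2
  refine ⟨r, cmap, hrinj, ?_, ?_⟩
  · intro j1 j2 hj
    have haeq : (⟨j1.val % k, hmod j1⟩ : Fin k) = ⟨j2.val % k, hmod j2⟩ := by
      apply hM
      funext b
      show M b ⟨j1.val % k, hmod j1⟩ = M b ⟨j2.val % k, hmod j2⟩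
      rw [← hmemT j1 b, ← hmemT j2 b, hj]
    have hj2 : F ⟨j1.val % k, hmod j1⟩ ⟨j1.val / k, hdiv j1⟩
        = F ⟨j2.val % k, hmod j2⟩ ⟨j2.val / k, hdiv j2⟩ := hj
    rw [← haeq] at hj2
    have hdeq : (⟨j1.val / k, hdiv j1⟩ : Fin t) = ⟨j2.val / k, hdiv j2⟩ :=
      hFinj _ hj2
    have hveq : (j1.val % k) = (j2.val % k) := by
      simpa using congrArg Fin.val haeq
    have hdveq : (j1.val / k) = (j2.val / k) := by
      simpa using congrArg Fin.val hdeq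
    refine Fin.ext ?_
    calc j1.val = j1.val % k + k * (j1.val / k) := (Nat.mod_add_div _ _).symm
      _ = j2.val % k + k * (j2.val / k) := by rw [hveq, hdveq]
      _ = j2.val := Nat.mod_add_div _ _
  · intro i j
    have := hmemT j i
    rw [this]
    rfl

lemma tCopies_val {k n t : ℕ} (M : Matrix (Fin k) (Fin n) Bool) (i : Fin k)
    (j : Fin (t * n)) (h : j.val % n < n) : tCopies t M i j = M i ⟨j.val % n, h⟩ := rfl

lemma simple_id (m : ℕ) :
    Simple (fun i j => decide (i = j) : Matrix (Fin m) (Fin m) Bool) := by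
  intro a b h
  have := congrFun h a
  simp only [decide_eq_decide] at this
  simp only [eq_self_iff_true, true_iff] at this
  exact this

lemma not_config_id {t k m : ℕ} (ht : 2 ≤ t) (hk : 0 < k)
    (M : Matrix (Fin k) (Fin k) Bool) (i0 : Fin k) (h0 : M i0 ⟨0, hk⟩ = true) :
    ¬ IsConfig (tCopies t M) (fun i j => decide (i = j) : Matrix (Fin m) (Fin m) Bool) := by
  rintro ⟨r, c, hr, hc, hval⟩
  have h0k : (0 : ℕ) < t * k := Nat.mul_pos (by omega) hk
  have hkk : k < t * k := by
    calc k = 1 * k := (one_mul k).symm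
      _ < t * k := (Nat.mul_lt_mul_right hk).mpr (by omega)
  have hmm : ∀ (j : Fin (t * k)), j.val % k < k := fun j => Nat.mod_lt _ hk
  have v0 : tCopies t M i0 ⟨0, h0k⟩ = true := by
    rw [tCopies_val M i0 ⟨0, h0k⟩ (hmm _)]
    have : (⟨(⟨0, h0k⟩ : Fin (t * k)).val % k, hmm _⟩ : Fin k) = ⟨0, hk⟩ :=
      Fin.ext (Nat.zero_mod k)
    rw [this, h0]
  have v1 : tCopies t M i0 ⟨k, hkk⟩ = true := by
    rw [tCopies_val M i0 ⟨k, hkk⟩ (hmm _)]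
    have : (⟨(⟨k, hkk⟩ : Fin (t * k)).val % k, hmm _⟩ : Fin k) = ⟨0, hk⟩ :=
      Fin.ext (Nat.mod_self k)
    rw [this, h0]
  have e0 := hval i0 ⟨0, h0k⟩
  have e1 := hval i0 ⟨k, hkk⟩
  rw [v0] at e0
  rw [v1] at e1
  have q0 : r i0 = c ⟨0, h0k⟩ := of_decide_eq_true e0
  have q1 : r i0 = c ⟨k, hkk⟩ := of_decide_eq_true e1
  have : (⟨0, h0k⟩ : Fin (t * k)) = ⟨k, hkk⟩ := hc (q0 ▸ q1 ▸ rfl)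
  have := congrArg Fin.val this
  simp only at this
  omega

lemma simple_card {m p : ℕ} (A : Matrix (Fin m) (Fin p) Bool) (hA : Simple A) :
    p ≤ 2 ^ m := by
  calc p = Fintype.card (Fin p) := (Fintype.card_fin p).symm
    _ ≤ Fintype.card (Fin m → Bool) := Fintype.card_le_of_injective _ hA
    _ = 2 ^ m := by simp [Fintype.card_fun]

end Stmt11

open Finset in
/-- **Theorem 4.5.** For `t, k ≥ 2`, `forb(m, {t·I_k, t·I_k^c, t·T_k}) = Θ(m)`. -/
theorem stmt_11 (t k : ℕ) (ht : 2 ≤ t) (hk : 2 ≤ k) :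
    ∃ (c1 c2 : ℝ) (m0 : ℕ), 0 < c1 ∧ 0 < c2 ∧ ∀ m : ℕ, m0 ≤ m →
      c1 * (m : ℝ) ≤
        (forbTriple m (tCopies t (Imat k)) (tCopies t (Icmat k)) (tCopies t (Tmat k)) : ℝ) ∧
      (forbTriple m (tCopies t (Imat k)) (tCopies t (Icmat k)) (tCopies t (Tmat k)) : ℝ) ≤
        c2 * (m : ℝ) := by
  classical
  have hkpos : 0 < k := by omega
  have ht1 : 1 ≤ t := by omega
  have hcpos : 0 < 2 * (t * 2 ^ (5 ^ (4 * k))) := by positivity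
  refine ⟨1, ((2 * (t * 2 ^ (5 ^ (4 * k))) : ℕ) : ℝ), 1, one_pos,
    by exact_mod_cast hcpos, ?_⟩
  intro m hm
  have hforb : forbTriple m (tCopies t (Imat k)) (tCopies t (Icmat k)) (tCopies t (Tmat k))
      = sSup { p : ℕ | ∃ A : Matrix (Fin m) (Fin p) Bool,
          Simple A ∧ ¬ IsConfig (tCopies t (Imat k)) A ∧
            ¬ IsConfig (tCopies t (Icmat k)) A ∧ ¬ IsConfig (tCopies t (Tmat k)) A } := rfl
  have hmem : m ∈ { p : ℕ | ∃ A : Matrix (Fin m) (Fin p) Bool,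
      Simple A ∧ ¬ IsConfig (tCopies t (Imat k)) A ∧
        ¬ IsConfig (tCopies t (Icmat k)) A ∧ ¬ IsConfig (tCopies t (Tmat k)) A } := by
    refine ⟨(fun i j => decide (i = j)), Stmt11.simple_id m, ?_, ?_, ?_⟩
    · exact Stmt11.not_config_id ht hkpos (Imat k) ⟨0, hkpos⟩ (by simp [Imat])
    · exact Stmt11.not_config_id ht hkpos (Icmat k) ⟨1, by omega⟩
        (by simp [Icmat, Fin.ext_iff])
    · exact Stmt11.not_config_id ht hkpos (Tmat k) ⟨0, hkpos⟩ (by simp [Tmat])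
  have hub : ∀ p ∈ { p : ℕ | ∃ A : Matrix (Fin m) (Fin p) Bool,
      Simple A ∧ ¬ IsConfig (tCopies t (Imat k)) A ∧
        ¬ IsConfig (tCopies t (Icmat k)) A ∧ ¬ IsConfig (tCopies t (Tmat k)) A },
      p ≤ t * 2 ^ (5 ^ (4 * k)) * (m + 1) := by
    rintro p ⟨A, hSimp, h1, h2, h3⟩
    have hGcard : ((univ : Finset (Fin p)).image fun j i => A i j).card = p := by
      rw [Finset.card_image_of_injective _ hSimp, Finset.card_univ, Fintype.card_fin]
    have hcore := Stmt11.core t k ht1 m ((univ : Finset (Fin p)).image fun j i => A i j)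
      (fun hg => h1 (Stmt11.good_to_config _ (Stmt11.Imat_colinj k) A hSimp hkpos hg))
      (fun hg => h2 (Stmt11.good_to_config _ (Stmt11.Icmat_colinj k) A hSimp hkpos hg))
      (fun hg => h3 (Stmt11.good_to_config _ (Stmt11.Tmat_colinj k) A hSimp hkpos hg))
    rw [hGcard] at hcore
    exact hcore
  have hBdd : BddAbove { p : ℕ | ∃ A : Matrix (Fin m) (Fin p) Bool,
      Simple A ∧ ¬ IsConfig (tCopies t (Imat k)) A ∧
        ¬ IsConfig (tCopies t (Icmat k)) A ∧ ¬ IsConfig (tCopies t (Tmat k)) A } :=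
    ⟨t * 2 ^ (5 ^ (4 * k)) * (m + 1), fun p hp => hub p hp⟩
  have hlow : m ≤ forbTriple m (tCopies t (Imat k)) (tCopies t (Icmat k)) (tCopies t (Tmat k)) := by
    rw [hforb]
    exact le_csSup hBdd hmem
  have hhigh : forbTriple m (tCopies t (Imat k)) (tCopies t (Icmat k)) (tCopies t (Tmat k))
      ≤ t * 2 ^ (5 ^ (4 * k)) * (m + 1) := by
    rw [hforb]
    exact csSup_le ⟨m, hmem⟩ hub
  constructor
  · rw [one_mul]
    exact_mod_cast hlow
  · have h2m : t * 2 ^ (5 ^ (4 * k)) * (m + 1) ≤ 2 * (t * 2 ^ (5 ^ (4 * k))) * m := by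
      have h1' : m + 1 ≤ 2 * m := by omega
      calc t * 2 ^ (5 ^ (4 * k)) * (m + 1) ≤ t * 2 ^ (5 ^ (4 * k)) * (2 * m) :=
            Nat.mul_le_mul_left _ h1'
        _ = 2 * (t * 2 ^ (5 ^ (4 * k))) * m := by ring
    calc (forbTriple m (tCopies t (Imat k)) (tCopies t (Icmat k)) (tCopies t (Tmat k)) : ℝ)
        ≤ ((t * 2 ^ (5 ^ (4 * k)) * (m + 1) : ℕ) : ℝ) := Nat.cast_le.mpr hhigh
      _ ≤ ((2 * (t * 2 ^ (5 ^ (4 * k))) * m : ℕ) : ℝ) := Nat.cast_le.mpr h2m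
      _ = ((2 * (t * 2 ^ (5 ^ (4 * k))) : ℕ) : ℝ) * m := by push_cast; ring
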